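/- Let X be a real Banach space, endow X with its weak topology and X* with the weak* topology, and let κ be an infinite cardinal. Then hL(X^n) ≤ κ for every n ∈ ℕ if and only if hd((X*)^n) ≤ κ for every n ∈ ℕ, where finite powers carry product topologies. -/

import Mathlib

open Cardinal Set Topology

universe u

noncomputable section

/-- The spread of a topological space: the supremum of cardinalities of discrete subspaces. -/
def spread (Z : Type u) [TopologicalSpace Z] : Cardinal.{u} :=
  ⨆ D : {D : Set Z // DiscreteTopology D}, #D.1

/-- The density of a topological space: the least cardinality of a dense subset. -/
def densityCard (Z : Type u) [TopologicalSpace Z] : Cardinal.{u} :=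
  ⨅ D : {D : Set Z // Dense D}, #D.1

/-- The hereditary density: the supremum of the densities of all subspaces. -/
def hdens (Z : Type u) [TopologicalSpace Z] : Cardinal.{u} :=
  ⨆ S : Set Z, densityCard S

/-- The Lindelöf degree: the least cardinal κ such that every open cover
has a subcover of cardinality at most κ. -/
def lindelofDeg (Z : Type u) [TopologicalSpace Z] : Cardinal.{u} :=
  sInf {κ | ∀ (ι : Type u) (U : ι → Set Z), (∀ i, IsOpen (U i)) → (⋃ i, U i) = Set.univ →
    ∃ t : Set ι, #t ≤ κ ∧ (⋃ i ∈ t, U i) = Set.univ}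

/-- The hereditary Lindelöf degree: the supremum of the Lindelöf degrees of all subspaces. -/
def hLindelof (Z : Type u) [TopologicalSpace Z] : Cardinal.{u} :=
  ⨆ S : Set Z, lindelofDeg S


abbrev OT (κ : Cardinal.{u}) : Type u := (Order.succ κ).ord.ToType

variable {κ : Cardinal.{u}}

instance : IsWellOrder (OT κ) (· < ·) := ⟨⟩

lemma OT_mk : #(OT κ) = Order.succ κ := Cardinal.mk_ord_toType _

lemma OT_initial (b : OT κ) : #{x : OT κ | x < b} ≤ κ := by
  have := Cardinal.mk_Iio_ord_toType b
  rw [Order.lt_succ_iff] at this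
  exact this

lemma OT_escape (hκ : ℵ₀ ≤ κ) {A s : Set (OT κ)} (hA : ¬ #A ≤ κ) (hs : #s ≤ κ) :
    ∃ a ∈ A, ∀ x ∈ s, x < a := by
  have hreg := Cardinal.isRegular_succ hκ
  have hbdd : Set.Bounded (· < ·) s := by
    by_contra hnb
    have hcof : IsCofinal s := fun b => by
      by_contra hc
      push_neg at hc
      exact hnb ⟨b, hc⟩
    have hc2 := Order.cof_le hcof
    rw [Ordinal.cof_toType, hreg.cof_ord] at hc2
    exact absurd (hc2.trans hs) (Order.lt_succ κ).not_ge
  obtain ⟨b, hb⟩ := hbdd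
  rcases em (∃ a ∈ A, b ≤ a) with ⟨a, ha, hba⟩ | hno
  · exact ⟨a, ha, fun x hx => lt_of_lt_of_le (hb x hx) hba⟩
  · exfalso
    apply hA
    have : A ⊆ {x : OT κ | x < b} := by
      intro x hx
      by_contra hxb
      exact hno ⟨x, hx, not_lt.1 hxb⟩
    exact (Cardinal.mk_le_mk_of_subset this).trans (OT_initial b)

lemma OT_pigeonhole (hκ : ℵ₀ ≤ κ) {A : Set (OT κ)} (hA : ¬ #A ≤ κ) (h : OT κ → ULift.{u} ℕ) :
    ∃ c, ¬ #{a | a ∈ A ∧ h a = c} ≤ κ := by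
  by_contra hc
  push_neg at hc
  apply hA
  have hcover : A ⊆ ⋃ c : ULift.{u} ℕ, {a | a ∈ A ∧ h a = c} := by
    intro a ha; exact Set.mem_iUnion.2 ⟨h a, ha, rfl⟩
  calc #A ≤ #(⋃ c : ULift.{u} ℕ, {a | a ∈ A ∧ h a = c}) := Cardinal.mk_le_mk_of_subset hcover
    _ ≤ Cardinal.sum fun c : ULift.{u} ℕ => #{a | a ∈ A ∧ h a = c} := Cardinal.mk_iUnion_le_sum_mk
    _ ≤ Cardinal.sum fun _ : ULift.{u} ℕ => κ := Cardinal.sum_le_sum _ _ fun c => hc c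
    _ = #(ULift.{u} ℕ) * κ := Cardinal.sum_const' _ _
    _ ≤ ℵ₀ * κ := by
        apply mul_le_mul_left
        simpa using Cardinal.mk_le_aleph0
    _ = κ := Cardinal.aleph0_mul_eq hκ

lemma OT_nonempty_of {A : Set (OT κ)} (hA : ¬ #A ≤ κ) : A.Nonempty := by
  rcases A.eq_empty_or_nonempty with h | h
  · exfalso; apply hA; subst h; simp
  · exact h

lemma OT_infinite (hκ : ℵ₀ ≤ κ) {A : Set (OT κ)} (hA : ¬ #A ≤ κ) : Infinite A := by
  rw [Cardinal.infinite_iff]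
  exact hκ.trans (le_of_not_ge hA)

/-- transfinite construction -/
lemma exists_seq {Z : Type u} (R : Set Z → Z → Prop)
    (hR : ∀ s : Set Z, #s ≤ κ → ∃ z, R s z) :
    ∃ F : OT κ → Z, ∀ α, R (F '' {β | β < α}) (F α) := by
  have key : ∀ (α : OT κ) (ih : ∀ β, β < α → Z), #{z | ∃ β h, ih β h = z} ≤ κ := by
    intro α ih
    have hsurj : Function.Surjective
        (fun b : {β : OT κ // β < α} => (⟨ih b.1 b.2, ⟨b.1, b.2, rfl⟩⟩ :
          {z | ∃ β h, ih β h = z})) := by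
      rintro ⟨z, β, hβ, rfl⟩; exact ⟨⟨β, hβ⟩, rfl⟩
    exact (Cardinal.mk_le_of_surjective hsurj).trans (OT_initial α)
  let F : OT κ → Z := IsWellFounded.fix (· < ·)
    (fun α ih => Classical.choose (hR {z | ∃ β h, ih β h = z} (key α ih)))
  refine ⟨F, fun α => ?_⟩
  have hfix : F α = Classical.choose (hR {z | ∃ β h, (fun β (_ : β < α) => F β) β h = z}
      (key α (fun β _ => F β))) := IsWellFounded.fix_eq _ _ _
  have hset : {z | ∃ β h, (fun β (_ : β < α) => F β) β h = z} = F '' {β | β < α} := by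
    ext z; simp only [Set.mem_setOf_eq, Set.mem_image]; tauto
  have := Classical.choose_spec (hR {z | ∃ β h, (fun β (_ : β < α) => F β) β h = z}
      (key α (fun β _ => F β)))
  rw [← hfix] at this
  rwa [hset] at this


/-- The covering-number property set. -/
def covSet (Z : Type u) [TopologicalSpace Z] : Set Cardinal.{u} :=
  {κ | ∀ (ι : Type u) (U : ι → Set Z), (∀ i, IsOpen (U i)) → (⋃ i, U i) = Set.univ →
    ∃ t : Set ι, #t ≤ κ ∧ (⋃ i ∈ t, U i) = Set.univ}

def densityCard' (Z : Type u) [TopologicalSpace Z] : Cardinal.{u} :=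
  ⨅ D : {D : Set Z // Dense D}, #D.1

def lindelofDeg' (Z : Type u) [TopologicalSpace Z] : Cardinal.{u} := sInf (covSet Z)

lemma mk_mem_covSet (Z : Type u) [TopologicalSpace Z] : #Z ∈ covSet Z := by
  intro ι U hop hcov
  have hex : ∀ z : Z, ∃ i, z ∈ U i := by
    intro z
    have : z ∈ ⋃ i, U i := hcov ▸ Set.mem_univ z
    exact Set.mem_iUnion.1 this
  choose g hg using hex
  refine ⟨Set.range g, Cardinal.mk_range_le, ?_⟩
  apply Set.eq_univ_of_forall
  intro z
  exact Set.mem_biUnion ⟨z, rfl⟩ (hg z)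

lemma lindelofDeg'_le_mk (Z : Type u) [TopologicalSpace Z] : lindelofDeg' Z ≤ #Z :=
  csInf_le' (mk_mem_covSet Z)

lemma densityCard'_le_mk (Z : Type u) [TopologicalSpace Z] : densityCard' Z ≤ #Z := by
  have := ciInf_le' (fun D : {D : Set Z // Dense D} => #D.1) ⟨Set.univ, dense_univ⟩
  exact le_trans this (le_of_eq Cardinal.mk_univ)

/-- generic basic neighborhoods for finite powers of a space with topology induced by a
map into a function space -/
lemma exists_basic {E D : Type u} [TopologicalSpace E] {T : E → D → ℝ} (hT : IsInducing T)
    {n : ℕ} {U : Set (Fin n → E)} (hU : IsOpen U) {z : Fin n → E} (hz : z ∈ U) :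
    ∃ (k : ℕ) (c : Fin k → Fin n) (d : Fin k → D) (ε : ℝ), 0 < ε ∧
      {w : Fin n → E | ∀ j, |T (w (c j)) (d j) - T (z (c j)) (d j)| < ε} ⊆ U := by
  classical
  have hU' : U ∈ nhds z := hU.mem_nhds hz
  rw [nhds_pi, Filter.mem_pi'] at hU'
  obtain ⟨I, t, ht, hsub⟩ := hU'
  have ht' : ∀ i : Fin n, ∃ V : Set (D → ℝ), V ∈ nhds (T (z i)) ∧ T ⁻¹' V ⊆ t i := by
    intro i
    have := ht i
    rw [hT.nhds_eq_comap, Filter.mem_comap] at this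
    obtain ⟨V, hV, hVsub⟩ := this
    exact ⟨V, hV, hVsub⟩
  choose V hV hVsub using ht'
  have hV' : ∀ i : Fin n, ∃ (J : Finset D) (s : D → Set ℝ),
      (∀ d, s d ∈ nhds (T (z i) d)) ∧ Set.pi ↑J s ⊆ V i := by
    intro i
    have := hV i
    rw [nhds_pi, Filter.mem_pi'] at this
    obtain ⟨J, s, hs, hsub'⟩ := this
    exact ⟨J, s, hs, hsub'⟩
  choose J s hs hssub using hV'
  have hball : ∀ (i : Fin n) (d : D), ∃ δ : ℝ, 0 < δ ∧
      Metric.ball (T (z i) d) δ ⊆ s i d := by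
    intro i d
    exact Metric.mem_nhds_iff.1 (hs i d)
  choose δ hδpos hδball using hball
  -- flatten
  let P : Finset (Fin n × D) := I.biUnion fun i => (J i).image (Prod.mk i)
  have hPmem : ∀ p ∈ P, p.1 ∈ I ∧ p.2 ∈ J p.1 := by
    intro p hp
    simp only [P, Finset.mem_biUnion, Finset.mem_image] at hp
    obtain ⟨i, hi, d, hd, rfl⟩ := hp
    exact ⟨hi, hd⟩
  have hPmem' : ∀ i ∈ I, ∀ d ∈ J i, (i, d) ∈ P := by
    intro i hi d hd
    simp only [P, Finset.mem_biUnion, Finset.mem_image]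
    exact ⟨i, hi, d, hd, rfl⟩
  let Fδ : Finset ℝ := insert 1 (P.image fun p => δ p.1 p.2)
  have hFne : Fδ.Nonempty := ⟨1, Finset.mem_insert_self _ _⟩
  let ε : ℝ := Fδ.min' hFne
  have hεpos : 0 < ε := by
    apply (Finset.lt_min'_iff _ _).2
    intro y hy
    simp only [Fδ, Finset.mem_insert, Finset.mem_image] at hy
    rcases hy with rfl | ⟨p, hp, rfl⟩
    · norm_num
    · exact hδpos p.1 p.2
  have hεle : ∀ p ∈ P, ε ≤ δ p.1 p.2 := by
    intro p hp
    apply Finset.min'_le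
    simp only [Fδ, Finset.mem_insert, Finset.mem_image]
    exact Or.inr ⟨p, hp, rfl⟩
  let e := P.equivFin.symm
  refine ⟨P.card, fun j => ((e j).1).1, fun j => ((e j).1).2, ε, hεpos, ?_⟩
  intro w hw
  apply hsub
  intro i hi
  apply hVsub i
  apply hssub i
  intro d hd
  have hp : (i, d) ∈ P := hPmem' i hi d hd
  have hj := hw (e.symm ⟨(i, d), hp⟩)
  simp only [Equiv.apply_symm_apply, e] at hj
  apply hδball i d
  rw [Metric.mem_ball, Real.dist_eq]
  calc |T (w i) d - T (z i) d| < ε := hj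
    _ ≤ δ i d := hεle (i, d) hp



lemma lindelofDeg_eq (Z : Type u) [TopologicalSpace Z] : lindelofDeg Z = sInf (covSet Z) := rfl

lemma densityCard_eq (Z : Type u) [TopologicalSpace Z] : densityCard Z = densityCard' Z := rfl

section Banach
variable {X : Type u} [NormedAddCommGroup X] [NormedSpace ℝ X] {κ : Cardinal.{u}}

def Pivot1 (X : Type u) [NormedAddCommGroup X] [NormedSpace ℝ X] (κ : Cardinal.{u}) : Prop :=
  ∃ (k : ℕ) (ε : ℝ), 0 < ε ∧ ∃ (v : X) (g : X →L[ℝ] ℝ), g v = 1 ∧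
    ∃ (A : Set (OT κ)) (x : A → Fin k → X) (f : A → Fin k → (X →L[ℝ] ℝ)),
      ¬ #A ≤ κ ∧ ∀ a b : A, (b : OT κ) < (a : OT κ) →
        ∃ j, ε ≤ |f b j (x a j) - f b j (x b j)|

def Pivot2 (X : Type u) [NormedAddCommGroup X] [NormedSpace ℝ X] (κ : Cardinal.{u}) : Prop :=
  ∃ (k : ℕ) (ε : ℝ), 0 < ε ∧ ∃ (v : X) (g : X →L[ℝ] ℝ), g v = 1 ∧
    ∃ (A : Set (OT κ)) (x : A → Fin k → X) (f : A → Fin k → (X →L[ℝ] ℝ)),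
      ¬ #A ≤ κ ∧ ∀ a b : A, (b : OT κ) < (a : OT κ) →
        ∃ j, ε ≤ |f b j (x a j) - f a j (x a j)|

lemma cast_eq_of_heq {n k1 k2 : ℕ} (h : k1 = k2) {f : Fin k1 → Fin n} {g : Fin k2 → Fin n}
    (hfg : HEq f g) (j : Fin k2) : f (Fin.cast h.symm j) = g j := by
  subst h
  have hfg' : f = g := eq_of_heq hfg
  subst hfg'
  apply congrArg
  ext
  simp

lemma L1 (hκ : ℵ₀ ≤ κ) {n : ℕ}
    (h : ¬ hLindelof (Fin n → WeakSpace ℝ X) ≤ κ) : Pivot1 X κ := by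
  classical
  have h1 : ∃ S : Set (Fin n → WeakSpace ℝ X), ¬ lindelofDeg ↥S ≤ κ := by
    by_contra hS
    push_neg at hS
    exact h (ciSup_le fun S => hS S)
  obtain ⟨S, hS⟩ := h1
  rw [lindelofDeg_eq] at hS
  have hκnot : κ ∉ covSet ↥S := fun hmem => hS (csInf_le' hmem)
  rw [covSet, Set.mem_setOf_eq] at hκnot
  push_neg at hκnot
  obtain ⟨ι, U, hop, hcov, hbad⟩ := hκnot
  have hR : ∀ s : Set (↥S × ι), #s ≤ κ → ∃ p : ↥S × ι, p.1 ∈ U p.2 ∧ ∀ q ∈ s, p.1 ∉ U q.2 := by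
    intro s hs
    have ht : #(Prod.snd '' s) ≤ κ := Cardinal.mk_image_le.trans hs
    have htne := hbad (Prod.snd '' s) ht
    obtain ⟨z, hz⟩ := (Set.ne_univ_iff_exists_notMem _).1 htne
    have hzc : z ∈ ⋃ i, U i := hcov ▸ Set.mem_univ z
    obtain ⟨i, hi⟩ := Set.mem_iUnion.1 hzc
    refine ⟨(z, i), hi, ?_⟩
    intro qq hq hzq
    exact hz (Set.mem_biUnion (Set.mem_image_of_mem _ hq) hzq)
  obtain ⟨F, hF⟩ := exists_seq _ hR
  set xx : OT κ → ↥S := fun α => (F α).1 with hxx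
  have hmem : ∀ α, xx α ∈ U (F α).2 := fun α => (hF α).1
  have hsep0 : ∀ α β, β < α → xx α ∉ U (F β).2 := by
    intro α β hβ
    exact (hF α).2 (F β) (Set.mem_image_of_mem F hβ)
  have hop' : ∀ α, ∃ V : Set (Fin n → WeakSpace ℝ X), IsOpen V ∧
      Subtype.val ⁻¹' V = U (F α).2 := by
    intro α; exact isOpen_induced_iff.1 (hop (F α).2)
  choose V hVop hVeq using hop'
  have hInd : IsInducing (fun (x : WeakSpace ℝ X) (φ : X →L[ℝ] ℝ) => φ x) := ⟨rfl⟩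
  have hbasic : ∀ α, ∃ (k : ℕ) (c : Fin k → Fin n) (d : Fin k → (X →L[ℝ] ℝ)) (ε : ℝ), 0 < ε ∧
      {w : Fin n → WeakSpace ℝ X | ∀ j, |d j (w (c j)) - d j ((xx α).1 (c j))| < ε} ⊆ V α := by
    intro α
    have hzV : (xx α).1 ∈ V α := by
      have := hmem α
      rw [← hVeq α] at this
      exact this
    obtain ⟨k, c, d, ε, hε, hsub⟩ := exists_basic hInd (hVop α) hzV
    exact ⟨k, c, d, ε, hε, hsub⟩
  choose k c d εf hεf hbsub using hbasic
  choose mf hmf using fun α => exists_nat_one_div_lt (hεf α)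
  have hsep : ∀ α β, β < α → ∃ j : Fin (k β),
      εf β ≤ |d β j ((xx α).1 (c β j)) - d β j ((xx β).1 (c β j))| := by
    intro α β hβ
    have h1 : (xx α).1 ∉ V β := by
      intro hc
      apply hsep0 α β hβ
      rw [← hVeq β]
      exact hc
    have h2 : (xx α).1 ∉ {w : Fin n → WeakSpace ℝ X |
        ∀ j, |d β j (w (c β j)) - d β j ((xx β).1 (c β j))| < εf β} :=
      fun hc => h1 (hbsub β hc)
    simp only [Set.mem_setOf_eq, not_forall, not_lt] at h2
    exact h2
  letI : ∀ kk : ℕ, Encodable (Fin kk → Fin n) := fun kk => inferInstance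
  let code : OT κ → ULift.{u} ℕ := fun α =>
    ⟨Nat.pair (k α) (Nat.pair (mf α) (Encodable.encode (⟨k α, c α⟩ : Σ kk : ℕ, Fin kk → Fin n)))⟩
  have hAuniv : ¬ #(Set.univ : Set (OT κ)) ≤ κ := by
    rw [Cardinal.mk_univ, OT_mk]
    exact fun hc => absurd hc (Order.lt_succ κ).not_ge
  obtain ⟨c₀, hA⟩ := OT_pigeonhole hκ hAuniv code
  set A : Set (OT κ) := {a | a ∈ Set.univ ∧ code a = c₀} with hAdef
  obtain ⟨a₀, ha₀⟩ := OT_nonempty_of hA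
  have hdec : ∀ a, a ∈ A → (k a = k a₀) ∧ mf a = mf a₀ ∧
      HEq (c a) (c a₀) := by
    intro a ha
    have hcode : code a = code a₀ := by rw [ha.2, ha₀.2]
    have hp := congrArg ULift.down hcode
    simp only [code] at hp
    rw [Nat.pair_eq_pair] at hp
    obtain ⟨hk, hp2⟩ := hp
    rw [Nat.pair_eq_pair] at hp2
    obtain ⟨hm, henc⟩ := hp2
    have hsig := Encodable.encode_injective henc
    obtain ⟨h1, h2⟩ := Sigma.ext_iff.mp hsig
    exact ⟨hk, hm, h2⟩
  let K := k a₀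
  let xxx : A → Fin K → X := fun a j => (xx a.1).1 (c a₀ j)
  let ff : A → Fin K → (X →L[ℝ] ℝ) := fun a j => d a.1 (Fin.cast (hdec a.1 a.2).1.symm j)
  have hSEP : ∀ a b : A, (b : OT κ) < (a : OT κ) →
      ∃ j, 1 / (mf a₀ + 1 : ℝ) ≤ |ff b j (xxx a j) - ff b j (xxx b j)| := by
    intro a b hlt
    obtain ⟨j', hj'⟩ := hsep a.1 b.1 hlt
    refine ⟨Fin.cast (hdec b.1 b.2).1 j', ?_⟩
    have hback : Fin.cast (hdec b.1 b.2).1.symm (Fin.cast (hdec b.1 b.2).1 j') = j' := by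
      ext; simp
    have e2 : c a₀ (Fin.cast (hdec b.1 b.2).1 j') = c b.1 j' := by
      rw [← cast_eq_of_heq (hdec b.1 b.2).1 (hdec b.1 b.2).2.2 (Fin.cast (hdec b.1 b.2).1 j'),
        hback]
    have hεb : 1 / (mf a₀ + 1 : ℝ) ≤ εf b.1 := by
      have h3 := hmf b.1
      rw [(hdec b.1 b.2).2.1] at h3
      exact h3.le
    show 1 / (mf a₀ + 1 : ℝ) ≤
      |d b.1 (Fin.cast (hdec b.1 b.2).1.symm (Fin.cast (hdec b.1 b.2).1 j'))
          ((xx a.1).1 (c a₀ (Fin.cast (hdec b.1 b.2).1 j'))) -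
        d b.1 (Fin.cast (hdec b.1 b.2).1.symm (Fin.cast (hdec b.1 b.2).1 j'))
          ((xx b.1).1 (c a₀ (Fin.cast (hdec b.1 b.2).1 j')))|
    rw [hback, e2]
    exact hεb.trans hj'
  have hεpos : (0:ℝ) < 1 / (mf a₀ + 1 : ℝ) := by positivity
  haveI := OT_infinite hκ hA
  obtain ⟨p, q, hne⟩ := exists_pair_ne ↥A
  have hex : ∃ a b : ↥A, (b : OT κ) < (a : OT κ) := by
    rcases lt_or_gt_of_ne (show (p : OT κ) ≠ (q : OT κ) from
      fun hc => hne (Subtype.coe_injective hc)) with hlt | hlt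
    · exact ⟨q, p, hlt⟩
    · exact ⟨p, q, hlt⟩
  obtain ⟨a, b, hab⟩ := hex
  obtain ⟨j, hj⟩ := hSEP a b hab
  have hu : ff b j (xxx a j - xxx b j) ≠ 0 := by
    rw [map_sub]
    intro h0
    rw [h0] at hj
    simp at hj
    linarith
  refine ⟨K, 1 / (mf a₀ + 1 : ℝ), hεpos,
    (ff b j (xxx a j - xxx b j))⁻¹ • (xxx a j - xxx b j), ff b j, ?_, A, xxx, ff, hA, hSEP⟩
  rw [map_smul, smul_eq_mul, inv_mul_cancel₀ hu]

lemma L3 (hκ : ℵ₀ ≤ κ) {n : ℕ}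
    (h : ¬ hdens (Fin n → WeakDual ℝ X) ≤ κ) : Pivot2 X κ := by
  classical
  have h1 : ∃ S : Set (Fin n → WeakDual ℝ X), ¬ densityCard ↥S ≤ κ := by
    by_contra hS
    push_neg at hS
    exact h (ciSup_le fun S => hS S)
  obtain ⟨S, hS⟩ := h1
  have hnd : ∀ D : Set ↥S, #D ≤ κ → ¬ Dense D := by
    intro D hD hdense
    exact hS (le_trans (ciInf_le' (fun D : {D : Set ↥S // Dense D} => #D.1) ⟨D, hdense⟩) hD)
  have hR : ∀ s : Set ↥S, #s ≤ κ → ∃ z : ↥S, z ∉ closure s := by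
    intro s hs
    have hnotd := hnd s hs
    rw [Dense] at hnotd
    obtain ⟨z, hz⟩ := not_forall.1 hnotd
    exact ⟨z, hz⟩
  obtain ⟨F, hF⟩ := exists_seq _ hR
  have hsep0 : ∀ α β : OT κ, β < α → F β ∈ closure (F '' {γ | γ < α}) := by
    intro α β hβ
    exact subset_closure (Set.mem_image_of_mem F hβ)
  have hop' : ∀ α : OT κ, ∃ V : Set (Fin n → WeakDual ℝ X), IsOpen V ∧
      Subtype.val ⁻¹' V = (closure (F '' {β | β < α}))ᶜ := by
    intro α
    exact isOpen_induced_iff.1 (isOpen_compl_iff.2 isClosed_closure)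
  choose V hVop hVeq using hop'
  have hxV : ∀ α, (F α).1 ∈ V α := by
    intro α
    have h2 : F α ∈ (closure (F '' {β | β < α}))ᶜ := hF α
    rw [← hVeq α] at h2
    exact h2
  have hInd : IsInducing (fun (f : WeakDual ℝ X) (y : X) => f y) := ⟨rfl⟩
  have hbasic : ∀ α, ∃ (k : ℕ) (c : Fin k → Fin n) (y : Fin k → X) (ε : ℝ), 0 < ε ∧
      {w : Fin n → WeakDual ℝ X |
        ∀ j, |w (c j) (y j) - (F α).1 (c j) (y j)| < ε} ⊆ V α := by
    intro α
    obtain ⟨k, c, yy, ε, hε, hsub⟩ := exists_basic hInd (hVop α) (hxV α)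
    exact ⟨k, c, yy, ε, hε, hsub⟩
  choose k c y εf hεf hbsub using hbasic
  choose mf hmf using fun α => exists_nat_one_div_lt (hεf α)
  have hsep : ∀ α β : OT κ, β < α → ∃ j : Fin (k α),
      εf α ≤ |(F β).1 (c α j) (y α j) - (F α).1 (c α j) (y α j)| := by
    intro α β hβ
    have h2 : (F β).1 ∉ V α := by
      intro hc
      have h3 : F β ∈ (closure (F '' {γ | γ < α}))ᶜ := by
        rw [← hVeq α]
        exact hc
      exact h3 (hsep0 α β hβ)
    have h4 : (F β).1 ∉ {w : Fin n → WeakDual ℝ X |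
        ∀ j, |w (c α j) (y α j) - (F α).1 (c α j) (y α j)| < εf α} :=
      fun hc => h2 (hbsub α hc)
    simp only [Set.mem_setOf_eq, not_forall, not_lt] at h4
    exact h4
  let code : OT κ → ULift.{u} ℕ := fun α =>
    ⟨Nat.pair (k α) (Nat.pair (mf α) (Encodable.encode (⟨k α, c α⟩ : Σ kk : ℕ, Fin kk → Fin n)))⟩
  have hAuniv : ¬ #(Set.univ : Set (OT κ)) ≤ κ := by
    rw [Cardinal.mk_univ, OT_mk]
    exact fun hc => absurd hc (Order.lt_succ κ).not_ge
  obtain ⟨c₀, hA⟩ := OT_pigeonhole hκ hAuniv code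
  set A : Set (OT κ) := {a | a ∈ Set.univ ∧ code a = c₀} with hAdef
  obtain ⟨a₀, ha₀⟩ := OT_nonempty_of hA
  have hdec : ∀ a, a ∈ A → (k a = k a₀) ∧ mf a = mf a₀ ∧ HEq (c a) (c a₀) := by
    intro a ha
    have hcode : code a = code a₀ := by rw [ha.2, ha₀.2]
    have hp := congrArg ULift.down hcode
    simp only [code] at hp
    rw [Nat.pair_eq_pair] at hp
    obtain ⟨hk, hp2⟩ := hp
    rw [Nat.pair_eq_pair] at hp2
    obtain ⟨hm, henc⟩ := hp2
    have hsig := Encodable.encode_injective henc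
    obtain ⟨h1, h2⟩ := Sigma.ext_iff.mp hsig
    exact ⟨hk, hm, h2⟩
  let K := k a₀
  let xxx : A → Fin K → X := fun a j => y a.1 (Fin.cast (hdec a.1 a.2).1.symm j)
  let ff : A → Fin K → (X →L[ℝ] ℝ) := fun a j => (F a.1).1 (c a₀ j)
  have hSEP : ∀ a b : A, (b : OT κ) < (a : OT κ) →
      ∃ j, 1 / (mf a₀ + 1 : ℝ) ≤ |ff b j (xxx a j) - ff a j (xxx a j)| := by
    intro a b hlt
    obtain ⟨j', hj'⟩ := hsep a.1 b.1 hlt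
    refine ⟨Fin.cast (hdec a.1 a.2).1 j', ?_⟩
    have hback : Fin.cast (hdec a.1 a.2).1.symm (Fin.cast (hdec a.1 a.2).1 j') = j' := by
      ext
      simp
    have e2 : c a₀ (Fin.cast (hdec a.1 a.2).1 j') = c a.1 j' := by
      rw [← cast_eq_of_heq (hdec a.1 a.2).1 (hdec a.1 a.2).2.2 (Fin.cast (hdec a.1 a.2).1 j'),
        hback]
    have hεa : 1 / (mf a₀ + 1 : ℝ) ≤ εf a.1 := by
      have h3 := hmf a.1
      rw [(hdec a.1 a.2).2.1] at h3
      exact h3.le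
    show 1 / (mf a₀ + 1 : ℝ) ≤
      |(F b.1).1 (c a₀ (Fin.cast (hdec a.1 a.2).1 j'))
          (y a.1 (Fin.cast (hdec a.1 a.2).1.symm (Fin.cast (hdec a.1 a.2).1 j'))) -
        (F a.1).1 (c a₀ (Fin.cast (hdec a.1 a.2).1 j'))
          (y a.1 (Fin.cast (hdec a.1 a.2).1.symm (Fin.cast (hdec a.1 a.2).1 j')))|
    rw [hback, e2]
    exact hεa.trans hj'
  have hεpos : (0:ℝ) < 1 / (mf a₀ + 1 : ℝ) := by positivity
  haveI := OT_infinite hκ hA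
  obtain ⟨p, q, hne⟩ := exists_pair_ne ↥A
  have hex : ∃ a b : ↥A, (b : OT κ) < (a : OT κ) := by
    rcases lt_or_gt_of_ne (show (p : OT κ) ≠ (q : OT κ) from
      fun hc => hne (Subtype.coe_injective hc)) with hlt | hlt
    · exact ⟨q, p, hlt⟩
    · exact ⟨p, q, hlt⟩
  obtain ⟨a, b, hab⟩ := hex
  obtain ⟨j, hj⟩ := hSEP a b hab
  have hu : (ff b j - ff a j) (xxx a j) ≠ 0 := by
    rw [ContinuousLinearMap.sub_apply]
    intro h0
    rw [h0] at hj
    simp at hj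
    linarith
  refine ⟨K, 1 / (mf a₀ + 1 : ℝ), hεpos,
    ((ff b j - ff a j) (xxx a j))⁻¹ • (xxx a j), ff b j - ff a j, ?_, A, xxx, ff, hA, ?_⟩
  · rw [map_smul, smul_eq_mul, inv_mul_cancel₀ hu]
  · exact hSEP

lemma L2 (hκ : ℵ₀ ≤ κ) (hp : Pivot1 X κ) :
    ∃ m : ℕ, ¬ hdens (Fin m → WeakDual ℝ X) ≤ κ := by
  classical
  obtain ⟨k, ε, hε, v, g, hgv, A, x, f, hA, hsep⟩ := hp
  refine ⟨k + k, ?_⟩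
  set Z := Fin (k + k) → WeakDual ℝ X with hZ
  let G : A → Z := fun a => Fin.append (fun j => (f a j : WeakDual ℝ X))
    (fun j => ((f a j (x a j)) • g : WeakDual ℝ X))
  let T : Set Z := Set.range G
  let V : A → Set Z := fun a =>
    {H | ∀ j : Fin k, |H (Fin.castAdd k j) (x a j) - H (Fin.natAdd k j) v| < ε/2}
  have hVop : ∀ a, IsOpen (V a) := by
    intro a
    have hVeq : V a = ⋂ j : Fin k,
        (fun H : Z => H (Fin.castAdd k j) (x a j) - H (Fin.natAdd k j) v) ⁻¹'
          (abs ⁻¹' Set.Iio (ε/2)) := by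
      ext H
      simp [V, Set.mem_iInter, Set.mem_preimage, Set.mem_Iio]
    rw [hVeq]
    apply isOpen_iInter_of_finite
    intro j
    apply IsOpen.preimage
    · exact ((WeakDual.eval_continuous (x a j)).comp
          (continuous_apply (A := fun _ : Fin (k+k) => WeakDual ℝ X) (Fin.castAdd k j))).sub
        ((WeakDual.eval_continuous v).comp
          (continuous_apply (A := fun _ : Fin (k+k) => WeakDual ℝ X) (Fin.natAdd k j)))
    · exact IsOpen.preimage continuous_abs isOpen_Iio
  have hGl : ∀ (a : A) (j : Fin k), G a (Fin.castAdd k j) = (f a j : WeakDual ℝ X) :=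
    fun a j => Fin.append_left _ _ j
  have hGr : ∀ (a : A) (j : Fin k),
      G a (Fin.natAdd k j) = ((f a j (x a j)) • g : WeakDual ℝ X) :=
    fun a j => Fin.append_right _ _ j
  have hmemV : ∀ a, G a ∈ V a := by
    intro a j
    rw [hGl, hGr]
    have h3 : ((f a j (x a j)) • g : WeakDual ℝ X) v = f a j (x a j) * g v := rfl
    have h4 : (f a j : WeakDual ℝ X) (x a j) = f a j (x a j) := rfl
    change |f a j (x a j) - f a j (x a j) * g v| < ε / 2
    rw [hgv, mul_one, sub_self, abs_zero]
    linarith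
  have hsepV : ∀ a b : A, (b : OT κ) < (a : OT κ) → G b ∉ V a := by
    intro a b hlt hc
    obtain ⟨j, hj⟩ := hsep a b hlt
    have h2 := hc j
    rw [hGl, hGr] at h2
    have h3 : ((f b j (x b j)) • g : WeakDual ℝ X) v = f b j (x b j) * g v := rfl
    have h4 : (f b j : WeakDual ℝ X) (x a j) = f b j (x a j) := rfl
    change |f b j (x a j) - f b j (x b j) * g v| < ε / 2 at h2
    rw [hgv, mul_one] at h2
    linarith
  have hdense : Order.succ κ ≤ densityCard ↥T := by
    haveI : Nonempty {D : Set ↥T // Dense D} := ⟨⟨Set.univ, dense_univ⟩⟩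
    apply le_ciInf
    rintro ⟨D, hD⟩
    by_contra hc
    have hDκ : #D ≤ κ := Order.lt_succ_iff.1 (not_le.1 hc)
    have hchoice : ∀ d : D, ∃ a : A, G a = (d.1 : Z) := fun d => d.1.2
    choose σ hσ using hchoice
    set s : Set (OT κ) := Set.range fun d : D => ((σ d : A) : OT κ) with hsdef
    have hs : #s ≤ κ := Cardinal.mk_range_le.trans hDκ
    obtain ⟨aa, haa, hbig⟩ := OT_escape hκ hA hs
    set a' : A := ⟨aa, haa⟩
    have hWopen : IsOpen (Subtype.val ⁻¹' (V a') : Set ↥T) :=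
      (hVop a').preimage continuous_subtype_val
    have hWne : (Subtype.val ⁻¹' (V a') : Set ↥T).Nonempty :=
      ⟨⟨G a', ⟨a', rfl⟩⟩, hmemV a'⟩
    obtain ⟨d, hdD, hdW⟩ := hD.exists_mem_open hWopen hWne
    have hGd : G (σ ⟨d, hdD⟩) = (d : Z) := hσ ⟨d, hdD⟩
    have hlt : ((σ ⟨d, hdD⟩ : A) : OT κ) < aa := hbig _ ⟨⟨d, hdD⟩, rfl⟩
    exact hsepV a' (σ ⟨d, hdD⟩) hlt (hGd ▸ hdW)
  intro hcon
  have h1 : densityCard ↥T ≤ hdens Z := by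
    have hbdd : BddAbove (Set.range fun S : Set Z => densityCard ↥S) := by
      refine ⟨#Z, ?_⟩
      rintro _ ⟨S, rfl⟩
      exact (densityCard'_le_mk ↥S).trans (Cardinal.mk_set_le S)
    exact le_ciSup hbdd T
  exact absurd (hdense.trans (h1.trans hcon)) (Order.lt_succ κ).not_ge

lemma L4 (hκ : ℵ₀ ≤ κ) (hp : Pivot2 X κ) :
    ∃ m : ℕ, ¬ hLindelof (Fin m → WeakSpace ℝ X) ≤ κ := by
  classical
  obtain ⟨k, ε, hε, v, g, hgv, A, x, f, hA, hsep⟩ := hp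
  refine ⟨k + k, ?_⟩
  set Z := Fin (k + k) → WeakSpace ℝ X with hZ
  let w : A → Z := fun a => Fin.append (fun j => (x a j : WeakSpace ℝ X))
    (fun j => ((f a j (x a j)) • v : WeakSpace ℝ X))
  let S : Set Z := Set.range w
  let U' : A → Set Z := fun a =>
    {z | ∀ j : Fin k, |f a j (z (Fin.castAdd k j)) - g (z (Fin.natAdd k j))| < ε/2}
  have hUop : ∀ a, IsOpen (U' a) := by
    intro a
    have hUeq : U' a = ⋂ j : Fin k,
        (fun z : Z => f a j (z (Fin.castAdd k j)) - g (z (Fin.natAdd k j))) ⁻¹'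
          (abs ⁻¹' Set.Iio (ε/2)) := by
      ext z
      simp [U', Set.mem_iInter, Set.mem_preimage, Set.mem_Iio]
    rw [hUeq]
    apply isOpen_iInter_of_finite
    intro j
    apply IsOpen.preimage
    · exact ((WeakBilin.eval_continuous ((topDualPairing ℝ X).flip) (f a j)).comp
          (continuous_apply (A := fun _ : Fin (k+k) => WeakSpace ℝ X) (Fin.castAdd k j))).sub
        ((WeakBilin.eval_continuous ((topDualPairing ℝ X).flip) g).comp
          (continuous_apply (A := fun _ : Fin (k+k) => WeakSpace ℝ X) (Fin.natAdd k j)))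
    · exact IsOpen.preimage continuous_abs isOpen_Iio
  have hwl : ∀ (a : A) (j : Fin k), w a (Fin.castAdd k j) = (x a j : WeakSpace ℝ X) :=
    fun a j => Fin.append_left _ _ j
  have hwr : ∀ (a : A) (j : Fin k),
      w a (Fin.natAdd k j) = ((f a j (x a j)) • v : WeakSpace ℝ X) :=
    fun a j => Fin.append_right _ _ j
  have hmemU : ∀ a, w a ∈ U' a := by
    intro a j
    rw [hwl, hwr]
    have h3 : g (((f a j (x a j)) • v : WeakSpace ℝ X)) = f a j (x a j) * g v := by
      show g ((f a j (x a j)) • v) = f a j (x a j) * g v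
      rw [map_smul, smul_eq_mul]
    rw [h3, hgv, mul_one, sub_self, abs_zero]
    linarith
  have hsepU : ∀ a b : A, (b : OT κ) < (a : OT κ) → w a ∉ U' b := by
    intro a b hlt hc
    obtain ⟨j, hj⟩ := hsep a b hlt
    have h2 := hc j
    rw [hwl, hwr] at h2
    have h3 : g (((f a j (x a j)) • v : WeakSpace ℝ X)) = f a j (x a j) * g v := by
      show g ((f a j (x a j)) • v) = f a j (x a j) * g v
      rw [map_smul, smul_eq_mul]
    rw [h3, hgv, mul_one] at h2
    linarith
  have hkey : ∀ μ ∈ covSet ↥S, Order.succ κ ≤ μ := by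
    intro μ hμ
    by_contra hc
    have hμκ : μ ≤ κ := Order.lt_succ_iff.1 (not_le.1 hc)
    have hcover : (⋃ a : A, (Subtype.val ⁻¹' (U' a) : Set ↥S)) = Set.univ := by
      apply Set.eq_univ_of_forall
      rintro ⟨z, hz⟩
      obtain ⟨a, rfl⟩ := hz
      exact Set.mem_iUnion.2 ⟨a, hmemU a⟩
    obtain ⟨t, htμ, htcov⟩ := hμ ↥A (fun a => Subtype.val ⁻¹' (U' a))
      (fun a => (hUop a).preimage continuous_subtype_val) hcover
    have hs : #((fun a : ↥A => (a : OT κ)) '' t) ≤ κ :=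
      Cardinal.mk_image_le.trans (htμ.trans hμκ)
    obtain ⟨aa, haa, hbig⟩ := OT_escape hκ hA hs
    set a' : A := ⟨aa, haa⟩
    have hmemS : w a' ∈ S := ⟨a', rfl⟩
    have : (⟨w a', hmemS⟩ : ↥S) ∈ ⋃ b ∈ t, Subtype.val ⁻¹' (U' b) :=
      htcov ▸ Set.mem_univ _
    obtain ⟨b, hbt, hb⟩ := Set.mem_iUnion₂.1 this
    have hlt : (b : OT κ) < (a' : OT κ) := hbig _ (Set.mem_image_of_mem _ hbt)
    exact hsepU a' b hlt hb
  intro hcon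
  have h1 : Order.succ κ ≤ lindelofDeg ↥S := by
    rw [lindelofDeg_eq]
    exact le_csInf ⟨#↥S, mk_mem_covSet _⟩ hkey
  have h2 : lindelofDeg ↥S ≤ hLindelof Z := by
    have hbdd : BddAbove (Set.range fun S : Set Z => lindelofDeg ↥S) := by
      refine ⟨#Z, ?_⟩
      rintro _ ⟨S, rfl⟩
      exact (lindelofDeg'_le_mk ↥S).trans (Cardinal.mk_set_le S)
    exact le_ciSup hbdd S
  exact absurd (h1.trans (h2.trans hcon)) (Order.lt_succ κ).not_ge

end Banach

/-- For a real Banach space `X` (with `X` carrying the weak topology and `X*`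
the weak* topology) and an infinite cardinal `κ`: `hL(Xⁿ) ≤ κ` for every `n` iff
`hd((X*)ⁿ) ≤ κ` for every `n`. -/
theorem stmt12 (X : Type u) [NormedAddCommGroup X] [NormedSpace ℝ X] [CompleteSpace X]
    (κ : Cardinal.{u}) (hκ : ℵ₀ ≤ κ) :
    (∀ n : ℕ, hLindelof (Fin n → WeakSpace ℝ X) ≤ κ) ↔
      (∀ n : ℕ, hdens (Fin n → WeakDual ℝ X) ≤ κ) := by
  constructor
  · intro hL
    by_contra hcon
    push_neg at hcon
    obtain ⟨n, hn⟩ := hcon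
    obtain ⟨m, hm⟩ := L4 hκ (L3 hκ hn.not_ge)
    exact hm (hL m)
  · intro hd
    by_contra hcon
    push_neg at hcon
    obtain ⟨n, hn⟩ := hcon
    obtain ⟨m, hm⟩ := L2 hκ (L1 hκ hn.not_ge)
    exact hm (hd m)

end
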